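/- Let 0 → A → B → C → 0 be a short exact sequence of R-modules with C quasi-Gorenstein projective. Then for every quasi-projective module Q, the induced sequence 0 → Hom(C,Q) → Hom(B,Q) → Hom(A,Q) → 0 is exact. -/

import Mathlib

open CategoryTheory

universe u
variable {R : Type u} [Ring R]

lemma factor_through_surjective {M N Q' : Type u} [AddCommGroup M] [AddCommGroup N]
    [AddCommGroup Q'] [Module R M] [Module R N] [Module R Q']
    (t : M →ₗ[R] N) (s : M →ₗ[R] Q') (ht : Function.Surjective t)
    (hker : ∀ x, t x = 0 → s x = 0) : ∃ u : N →ₗ[R] Q', u ∘ₗ t = s := by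
  have hle : LinearMap.ker t ≤ LinearMap.ker s := fun x hx => hker x hx
  refine ⟨((LinearMap.ker t).liftQ s hle) ∘ₗ (t.quotKerEquivOfSurjective ht).symm.toLinearMap, ?_⟩
  ext x
  have h1 : (t.quotKerEquivOfSurjective ht) (Submodule.Quotient.mk x) = t x := by
    simp [LinearMap.quotKerEquivOfSurjective]
  have h2 : (t.quotKerEquivOfSurjective ht).symm (t x) = Submodule.Quotient.mk x := by
    rw [LinearEquiv.symm_apply_eq, h1]
  simp [h2]


/-- A module `Q` is quasi-projective if every homomorphism from `Q` to a quotient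
of `Q` lifts to an endomorphism of `Q`. -/
def QuasiProjective (Q : ModuleCat.{u} R) : Prop :=
  ∀ (B : ModuleCat.{u} R) (g : Q ⟶ B), Function.Surjective g →
    ∀ f : Q ⟶ B, ∃ h : Q ⟶ Q, h ≫ g = f

/-- `M` is quasi-Gorenstein projective if it is a syzygy of an exact complex of
projective modules (given by short exact sequences `0 → K (n+1) → P n → K n → 0`)
that remains exact under `Hom(-, Q)` for every quasi-projective module `Q`. -/
def QuasiGorensteinProjective (M : ModuleCat.{u} R) : Prop :=
  ∃ (K P : ℤ → ModuleCat.{u} R) (ι : ∀ n, K (n + 1) ⟶ P n) (π : ∀ n, P n ⟶ K n),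
    (∀ n, Module.Projective R (P n)) ∧
    (∀ n, Function.Injective (ι n)) ∧
    (∀ n, Function.Surjective (π n)) ∧
    (∀ n, Function.Exact (ι n) (π n)) ∧
    (∀ n (Q : ModuleCat.{u} R), QuasiProjective Q →
      ∀ f : K (n + 1) ⟶ Q, ∃ g : P n ⟶ Q, ι n ≫ g = f) ∧
    Nonempty (M ≅ K 0)

/-- For a short exact sequence `0 → A → B → C → 0` with `C` quasi-Gorenstein projective,
the sequence `0 → Hom(C,Q) → Hom(B,Q) → Hom(A,Q) → 0` is exact for every
quasi-projective `Q`. -/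
theorem hom_exact_of_quasiGorensteinProjective
    {A B C : ModuleCat.{u} R} (f : A ⟶ B) (g : B ⟶ C)
    (hf : Function.Injective f) (hg : Function.Surjective g)
    (hfg : Function.Exact f g) (hC : QuasiGorensteinProjective C)
    (Q : ModuleCat.{u} R) (hQ : QuasiProjective Q) :
    Function.Injective (fun φ : C ⟶ Q => g ≫ φ) ∧
    Function.Exact (fun φ : C ⟶ Q => g ≫ φ) (fun ψ : B ⟶ Q => f ≫ ψ) ∧
    Function.Surjective (fun ψ : B ⟶ Q => f ≫ ψ) := by
  have hcomp0 : ∀ a : A, g (f a) = 0 := fun a => hfg.apply_apply_eq_zero a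
  refine ⟨?_, ?_, ?_⟩
  · -- injectivity
    intro φ₁ φ₂ h
    simp only at h
    ext c
    obtain ⟨b, rfl⟩ := hg c
    calc φ₁ (g b) = (g ≫ φ₁) b := rfl
      _ = (g ≫ φ₂) b := by rw [h]
      _ = φ₂ (g b) := rfl
  · -- exactness in the middle
    intro ψ
    constructor
    · intro h0
      simp only at h0
      obtain ⟨u, hu⟩ := factor_through_surjective g.hom ψ.hom hg
        (fun b hb => by
          obtain ⟨a, rfl⟩ := (hfg b).mp hb
          simpa using LinearMap.congr_fun (congrArg ModuleCat.Hom.hom h0) a)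
      refine ⟨ModuleCat.ofHom u, ?_⟩
      ext b
      simpa using LinearMap.congr_fun hu b
    · rintro ⟨φ, rfl⟩
      simp only
      ext a
      show φ (g (f a)) = 0
      rw [hcomp0 a, map_zero]
  · -- surjectivity
    obtain ⟨K, P, ι, π, hP, hι, hπ, hexact, hlift, ⟨e⟩⟩ := hC
    intro α
    -- lift π 0 ≫ e.inv through g using projectivity of P 0
    have := hP 0
    obtain ⟨p, hp⟩ := Module.projective_lifting_property g.hom
      (e.inv.hom ∘ₗ (π 0).hom) hg
    have hp' : ∀ x, g (p x) = e.inv (π 0 x) := fun x =>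
      LinearMap.congr_fun hp x
    -- construct q : K 1 → A with f ∘ q = p ∘ ι 0
    have hmem : ∀ k : K (0 + 1), p (ι 0 k) ∈ LinearMap.range f.hom := by
      intro k
      have hz : g (p (ι 0 k)) = 0 := by
        rw [hp' (ι 0 k)]
        have : π 0 (ι 0 k) = 0 := (hexact 0).apply_apply_eq_zero k
        rw [this, map_zero]
      obtain ⟨a, ha⟩ := (hfg _).mp hz
      exact ⟨a, ha⟩
    let q : K (0 + 1) →ₗ[R] A :=
      ((LinearEquiv.ofInjective f.hom hf).symm : LinearMap.range f.hom →ₗ[R] A) ∘ₗ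
        (LinearMap.codRestrict _ ((p : P 0 →ₗ[R] B) ∘ₗ (ι 0).hom) hmem)
    have hq : ∀ k, f (q k) = p (ι 0 k) := by
      intro k
      show f.hom (q k) = p (ι 0 k)
      simp only [q, LinearMap.coe_comp, Function.comp_apply, LinearMap.codRestrict_apply]
      have := (LinearEquiv.ofInjective f.hom hf).apply_symm_apply
        ⟨p (ι 0 k), hmem k⟩
      calc f.hom ((LinearEquiv.ofInjective f.hom hf).symm ⟨p (ι 0 k), hmem k⟩)
          = ((LinearEquiv.ofInjective f.hom hf)
              ((LinearEquiv.ofInjective f.hom hf).symm ⟨p (ι 0 k), hmem k⟩) : B) := rfl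
        _ = p (ι 0 k) := by rw [this]
    -- lift q ≫ α through ι 0
    obtain ⟨β, hβ⟩ := hlift 0 Q hQ (ModuleCat.ofHom (α.hom ∘ₗ q))
    have hβ' : ∀ k, β (ι 0 k) = α (q k) := fun k =>
      by simpa using LinearMap.congr_fun (congrArg ModuleCat.Hom.hom hβ) k
    -- T : P 0 × A → B, S : P 0 × A → Q
    let T : (P 0 × A) →ₗ[R] B :=
      (p : P 0 →ₗ[R] B) ∘ₗ LinearMap.fst R (P 0) A + f.hom ∘ₗ LinearMap.snd R (P 0) A
    let S : (P 0 × A) →ₗ[R] Q :=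
      β.hom ∘ₗ LinearMap.fst R (P 0) A + α.hom ∘ₗ LinearMap.snd R (P 0) A
    have hT : Function.Surjective T := by
      intro b
      obtain ⟨x, hx⟩ := hπ 0 (e.hom (g b))
      have h1 : g (p x) = g b := by
        rw [hp' x, hx]
        show (e.hom ≫ e.inv) (g b) = g b
        rw [e.hom_inv_id]; rfl
      have hz : g (b - p x) = 0 := by rw [map_sub, h1, sub_self]
      obtain ⟨a, ha⟩ := (hfg _).mp hz
      exact ⟨(x, a), by simp [T, ha]⟩
    have hkerT : ∀ x : P 0 × A, T x = 0 → S x = 0 := by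
      rintro ⟨x, a⟩ hx
      have hx' : p x + f a = 0 := hx
      have hgx : e.inv (π 0 x) = 0 := by
        rw [← hp' x]
        have : g (p x + f a) = 0 := by rw [hx', map_zero]
        rw [map_add, hcomp0 a, add_zero] at this
        exact this
      have hπx : π 0 x = 0 := by
        have : e.hom (e.inv (π 0 x)) = e.hom 0 := by rw [hgx]
        rw [map_zero] at this
        calc π 0 x = (e.inv ≫ e.hom) (π 0 x) := by rw [e.inv_hom_id]; rfl
          _ = 0 := this
      obtain ⟨k, rfl⟩ := (hexact 0 x).mp hπx
      have ha : a = -q k := by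
        apply hf
        rw [map_neg, hq k]
        have : f a = -p (ι 0 k) := by
          rw [eq_neg_iff_add_eq_zero, add_comm]; exact hx'
        rw [this]
      show β (ι 0 k) + α a = 0
      rw [hβ' k, ha, map_neg, add_neg_cancel]
    obtain ⟨u, hu⟩ := factor_through_surjective T S hT hkerT
    refine ⟨ModuleCat.ofHom u, ?_⟩
    simp only
    ext a
    show u (f a) = α a
    have : f a = T (0, a) := by simp [T]
    rw [this]
    have := LinearMap.congr_fun hu (0, a)
    simp only [LinearMap.coe_comp, Function.comp_apply] at this
    rw [this]
    simp [S]
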